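/- Let G be a finitely generated pro-p group and J the kernel of the ring homomorphism ℤ_p[[G]] → ℤ/p (augmentation followed by reduction mod p). Then ⋂_{k≥1} J^k = 0, and hence the intersection of the closures of the powers of the augmentation ideal I of ℤ_p[[G]] is trivial. -/

import Mathlib

set_option linter.unusedSectionVars false

open scoped BigOperators

/-- The multiplicative group structure that `AddAut M` carried in the older Mathlib
(`e₁ * e₂ = e₂.trans e₁`, `1 = refl`, `e⁻¹ = e.symm`); Mathlib now makes `AddAut M` additive. -/
instance addAutGroupOld (M : Type*) [Add M] : Group (AddAut M) where
  mul g h := AddEquiv.trans h g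
  one := AddEquiv.refl _
  inv := AddEquiv.symm
  mul_assoc _ _ _ := rfl
  one_mul _ := rfl
  mul_one _ := rfl
  inv_mul_cancel := AddEquiv.self_trans_symm

theorem addAutOld_one_apply {M : Type*} [Add M] (m : M) : (1 : AddAut M) m = m :=
  rfl

section ContCohomology

variable (G : Type*) [Group G] [TopologicalSpace G]
variable (M : Type*) [AddCommGroup M] [TopologicalSpace M] [IsTopologicalAddGroup M]

/-- The differential on inhomogeneous cochains of a topological group `G` with
coefficients in a topological abelian group `M`, for the action `ρ`. -/
def ccd (ρ : G →* AddAut M) (n : ℕ) : ((Fin n → G) → M) →+ ((Fin (n + 1) → G) → M) where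
  toFun f := fun g =>
    ρ (g 0) (f fun i => g i.succ) +
      ∑ j : Fin (n + 1), ((-1 : ℤ) ^ ((j : ℕ) + 1)) • f (Fin.contractNth j (· * ·) g)
  map_zero' := by
    funext g
    simp
  map_add' f₁ f₂ := by
    funext g
    simp only [Pi.add_apply, map_add, smul_add, Finset.sum_add_distrib]
    abel

/-- Continuous cochains. -/
def contCochain (n : ℕ) : AddSubgroup ((Fin n → G) → M) where
  carrier := {f | Continuous f}
  zero_mem' := continuous_const
  add_mem' hf hg := hf.add hg
  neg_mem' hf := hf.neg

/-- Continuous cocycles. -/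
def contCocycle (ρ : G →* AddAut M) (n : ℕ) : AddSubgroup ((Fin n → G) → M) :=
  contCochain G M n ⊓ (ccd G M ρ n).ker

/-- Continuous coboundaries. -/
def contCoboundary (ρ : G →* AddAut M) : (n : ℕ) → AddSubgroup ((Fin n → G) → M)
  | 0 => ⊥
  | (n + 1) => (contCochain G M n).map (ccd G M ρ n)

/-- Continuous group cohomology of a topological group with coefficients in a topological
abelian group, via inhomogeneous continuous cochains. -/
def Hcont (ρ : G →* AddAut M) (n : ℕ) : Type _ :=
  contCocycle G M ρ n ⧸ (contCoboundary G M ρ n).addSubgroupOf (contCocycle G M ρ n)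

noncomputable instance (ρ : G →* AddAut M) (n : ℕ) : AddCommGroup (Hcont G M ρ n) :=
  QuotientAddGroup.Quotient.addCommGroup _

end ContCohomology

section Restriction

variable {K G : Type*} [Group K] [Group G] [TopologicalSpace K] [TopologicalSpace G]
variable (M : Type*) [AddCommGroup M] [TopologicalSpace M] [IsTopologicalAddGroup M]

/-- Restriction of cochains along a group homomorphism. -/
def resCochain (φ : K →* G) (n : ℕ) : ((Fin n → G) → M) →+ ((Fin n → K) → M) where
  toFun f := fun g => f (φ ∘ g)
  map_zero' := rfl
  map_add' _ _ := rfl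

lemma comp_contractNth (φ : K →* G) {n : ℕ} (j : Fin (n + 1)) (g : Fin (n + 1) → K) :
    (φ ∘ Fin.contractNth j (· * ·) g) = Fin.contractNth j (· * ·) (φ ∘ g) := by
  funext i
  simp only [Function.comp_apply, Fin.contractNth]
  split_ifs <;> simp

lemma resCochain_comm_ccd (φ : K →* G) (n : ℕ) (f : (Fin n → G) → M) :
    resCochain M φ (n + 1) (ccd G M 1 n f) = ccd K M 1 n (resCochain M φ n f) := by
  funext g
  simp only [resCochain, ccd, AddMonoidHom.coe_mk, ZeroHom.coe_mk, MonoidHom.one_apply,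
    addAutOld_one_apply]
  congr 1
  refine Finset.sum_congr rfl fun j _ => ?_
  rw [comp_contractNth]

lemma resCochain_continuous (φ : K →* G) (hφ : Continuous φ) (n : ℕ)
    (f : (Fin n → G) → M) (hf : Continuous f) : Continuous (resCochain M φ n f) :=
  hf.comp (continuous_pi fun i => hφ.comp (continuous_apply i))

/-- Restriction on cocycles. -/
def resCocycle (φ : K →* G) (hφ : Continuous φ) (n : ℕ) :
    contCocycle G M 1 n →+ contCocycle K M 1 n :=
  AddMonoidHom.codRestrict ((resCochain M φ n).comp (contCocycle G M 1 n).subtype) _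
    (by
      rintro ⟨f, hf⟩
      simp only [contCocycle, AddSubgroup.mem_inf] at hf ⊢
      obtain ⟨hf1, hf2⟩ := hf
      constructor
      · exact resCochain_continuous M φ hφ n f hf1
      · rw [AddMonoidHom.mem_ker] at hf2 ⊢
        show ccd K M 1 n (resCochain M φ n f) = 0
        rw [← resCochain_comm_ccd M φ n f, hf2]
        rfl)

/-- The canonical map on continuous group cohomology (with trivial coefficients) induced
by a continuous group homomorphism. -/
def Hres (φ : K →* G) (hφ : Continuous φ) (n : ℕ) : Hcont G M 1 n →+ Hcont K M 1 n :=
  QuotientAddGroup.map _ _ (resCocycle M φ hφ n)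
    (by
      intro x hx
      rw [AddSubgroup.mem_comap, AddSubgroup.mem_addSubgroupOf]
      rw [AddSubgroup.mem_addSubgroupOf] at hx
      cases n with
      | zero =>
        simp only [contCoboundary, AddSubgroup.mem_bot] at hx ⊢
        show resCochain M φ 0 (x : (Fin 0 → G) → M) = 0
        rw [hx]
        exact map_zero _
      | succ n =>
        obtain ⟨u, hu, hux⟩ := hx
        refine ⟨resCochain M φ n u, resCochain_continuous M φ hφ n u hu, ?_⟩
        show ccd K M 1 n (resCochain M φ n u) = _
        rw [← resCochain_comm_ccd M φ n u, hux]
        rfl)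

end Restriction

section Discrete

variable (G : Type*) [Group G]
variable (M : Type*) [AddCommGroup M] [TopologicalSpace M] [IsTopologicalAddGroup M]

/-- Ordinary group cohomology of a discrete group, as continuous cohomology for the
bottom (discrete) topology. -/
abbrev Hdisc (n : ℕ) : Type _ := @Hcont G _ ⊥ M _ _ _ 1 n

/-- The comparison map from the continuous cohomology of a topological group `Ghat` to
the ordinary cohomology of a (discrete) group `G`, induced by `φ : G →* Ghat`. -/
def HcompMap (Ghat : Type*) [Group Ghat] [TopologicalSpace Ghat] (φ : G →* Ghat) (n : ℕ) :
    Hcont Ghat M 1 n →+ Hdisc G M n :=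
  @Hres G Ghat _ _ ⊥ _ M _ _ _ φ continuous_bot n

end Discrete

section ProP

/-- A pro-`p` group: a compact, Hausdorff, totally disconnected topological group all of whose
finite continuous quotients are `p`-groups. -/
structure IsProPGroup (p : ℕ) (G : Type*) [Group G] [TopologicalSpace G] : Prop where
  compact : CompactSpace G
  t2 : T2Space G
  td : TotallyDisconnectedSpace G
  topGrp : IsTopologicalGroup G
  proP : ∀ (P : Type) [Group P] [Finite P] (ψ : G →* P),
    (∀ s : Set P, IsOpen (ψ ⁻¹' s)) → Function.Surjective ψ → IsPGroup p P

/-- `φ : G →* Ghat` exhibits the topological group `Ghat` as the pro-`p` completion of the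
discrete group `G`: `Ghat` is a pro-`p` group, `φ` has dense image, and every homomorphism
from `G` to a finite `p`-group factors uniquely through a continuous homomorphism on `Ghat`. -/
structure IsProPCompletion (p : ℕ) {G : Type*} [Group G] {Ghat : Type*} [Group Ghat]
    [TopologicalSpace Ghat] (φ : G →* Ghat) : Prop where
  compact : CompactSpace Ghat
  t2 : T2Space Ghat
  td : TotallyDisconnectedSpace Ghat
  topGrp : IsTopologicalGroup Ghat
  dense : DenseRange φ
  proP : ∀ (P : Type) [Group P] [Finite P] (ψ : Ghat →* P),
    (∀ s : Set P, IsOpen (ψ ⁻¹' s)) → Function.Surjective ψ → IsPGroup p P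
  lift : ∀ (P : Type) [Group P] [Finite P], IsPGroup p P → ∀ f : G →* P,
    ∃! g : Ghat →* P, (∀ s : Set P, IsOpen (g ⁻¹' s)) ∧ g.comp φ = f

/-- Additive version of `IsProPCompletion`. -/
structure IsProPCompletionAdd (p : ℕ) {G : Type*} [AddGroup G] {Ghat : Type*} [AddGroup Ghat]
    [TopologicalSpace Ghat] (φ : G →+ Ghat) : Prop where
  compact : CompactSpace Ghat
  t2 : T2Space Ghat
  td : TotallyDisconnectedSpace Ghat
  topGrp : IsTopologicalAddGroup Ghat
  dense : DenseRange φ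
  proP : ∀ (P : Type) [AddGroup P] [Finite P] (ψ : Ghat →+ P),
    (∀ s : Set P, IsOpen (ψ ⁻¹' s)) → Function.Surjective ψ → IsPGroup p (Multiplicative P)
  lift : ∀ (P : Type) [AddGroup P] [Finite P], IsPGroup p (Multiplicative P) → ∀ f : G →+ P,
    ∃! g : Ghat →+ P, (∀ s : Set P, IsOpen (g ⁻¹' s)) ∧ g.comp φ = f

/-- A free pro-`p` group: the pro-`p` completion of a free group. -/
def IsFreeProPGroup (p : ℕ) (F : Type*) [Group F] [TopologicalSpace F] : Prop :=
  ∃ (X : Type) (φ : FreeGroup X →* F), IsProPCompletion p φ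

/-- The lower central series of a topological group, defined with closures:
`gammaHat F 0 = F` and `gammaHat F (k+1)` is the closure of `[gammaHat F k, F]`.
(Indexing: `gammaHat F k` is `γ_{k+1}` of the paper.) -/
def gammaHat (F : Type*) [Group F] [TopologicalSpace F] [IsTopologicalGroup F] :
    ℕ → Subgroup F
  | 0 => ⊤
  | (k + 1) => Subgroup.topologicalClosure ⁅gammaHat F k, (⊤ : Subgroup F)⁆

end ProP

section ZModTop

instance (n : ℕ) : TopologicalSpace (ZMod n) := ⊥
instance (n : ℕ) : DiscreteTopology (ZMod n) := ⟨rfl⟩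
instance (n : ℕ) : IsTopologicalAddGroup (ZMod n) where
  continuous_add := continuous_of_discreteTopology
  continuous_neg := continuous_of_discreteTopology

end ZModTop

section CompletedGroupRing

open scoped Classical

noncomputable instance monoidAlgebraTopology (k H : Type*) [Semiring k] [TopologicalSpace k] :
    TopologicalSpace (MonoidAlgebra k H) :=
  TopologicalSpace.induced (fun f h => f.coeff h) Pi.topologicalSpace

variable (p : ℕ) [Fact p.Prime] (G : Type*) [Group G] [TopologicalSpace G] [IsTopologicalGroup G]

/-- Transition maps of the inverse system `(ℤ_p[G/N])_N`. -/
noncomputable def cgrTrans (N M : OpenNormalSubgroup G) (h : N.toSubgroup ≤ M.toSubgroup) :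
    MonoidAlgebra ℤ_[p] (G ⧸ N.toSubgroup) →+* MonoidAlgebra ℤ_[p] (G ⧸ M.toSubgroup) :=
  MonoidAlgebra.mapDomainRingHom ℤ_[p]
    (QuotientGroup.map N.toSubgroup M.toSubgroup (MonoidHom.id G) (by simpa using h))

/-- The completed group ring `ℤ_p[[G]]` of a profinite group `G`, realized as the inverse
limit of the group rings `ℤ_p[G/N]` over the open normal subgroups `N` of `G`. -/
noncomputable def CompletedGroupRing :
    Subring (Π N : OpenNormalSubgroup G, MonoidAlgebra ℤ_[p] (G ⧸ N.toSubgroup)) where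
  carrier := {x | ∀ (N M : OpenNormalSubgroup G) (h : N.toSubgroup ≤ M.toSubgroup),
    cgrTrans p G N M h (x N) = x M}
  zero_mem' := by intro N M h; simp
  one_mem' := by intro N M h; simp
  add_mem' := by intro x y hx hy N M h; simp [map_add, hx N M h, hy N M h]
  mul_mem' := by intro x y hx hy N M h; simp [map_mul, hx N M h, hy N M h]
  neg_mem' := by intro x hx N M h; simp [map_neg, hx N M h]

/-- The top open normal subgroup. -/
def cgrTop : OpenNormalSubgroup G :=
  { toOpenSubgroup := ⊤, isNormal' := ⟨fun _ h _ => by simpa using h⟩ }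

/-- The augmentation `ℤ_p[[G]] → ℤ_p`. -/
noncomputable def cgrAug : CompletedGroupRing p G →+* ℤ_[p] :=
  (((MonoidAlgebra.lift ℤ_[p] ℤ_[p] (G ⧸ (cgrTop G).toSubgroup)) 1).toRingHom).comp
    (((Pi.evalRingHom _ (cgrTop G)).comp (CompletedGroupRing p G).subtype))

/-- The augmentation ideal `I` of `ℤ_p[[G]]`. -/
noncomputable def cgrAugIdeal : Ideal (CompletedGroupRing p G) := RingHom.ker (cgrAug p G)

/-- The radical `J` of `ℤ_p[[G]]`: the kernel of `ℤ_p[[G]] → ℤ/p`. -/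
noncomputable def cgrRadical : Ideal (CompletedGroupRing p G) :=
  RingHom.ker ((PadicInt.toZMod (p := p)).comp (cgrAug p G))

/-- The canonical (multiplicative) map `G → ℤ_p[[G]]`. -/
noncomputable def cgrOf : G →* CompletedGroupRing p G where
  toFun g := ⟨fun N => MonoidAlgebra.single (QuotientGroup.mk g) 1, by
    intro N M h
    simp [cgrTrans, MonoidAlgebra.mapDomainRingHom, Finsupp.mapDomain_single]⟩
  map_one' := by
    apply Subtype.ext
    funext N
    simp [MonoidAlgebra.one_def]
  map_mul' g g' := by
    apply Subtype.ext
    funext N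
    simp [MonoidAlgebra.single_mul_single]

end CompletedGroupRing



lemma aux_sub_one_pow {R : Type*} [Ring R] {p : ℕ} (hp : p.Prime) (a : ℕ)
    (x : R) (hx : x ^ p ^ a = 1) : (p : R) ∣ (x - 1) ^ p ^ a := by
  obtain ⟨m, hm⟩ : ∃ m, p ^ a = m + 1 := ⟨p ^ a - 1, by have := Nat.one_le_pow a p hp.pos; omega⟩
  have hb := (Commute.neg_one_right x).add_pow (p ^ a)
  rw [sub_eq_add_neg, hb, hm, Finset.sum_range_succ, Finset.sum_range_succ', add_assoc]
  refine dvd_add (Finset.dvd_sum fun i hi => ?_) ?_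
  · have hine : i + 1 ≠ p ^ a := by rw [hm]; simp at hi; omega
    obtain ⟨c, hc⟩ := hp.dvd_choose_pow (Nat.succ_ne_zero i) hine
    rw [hm] at hc
    refine ⟨x ^ (i+1) * (-1:R) ^ (m - i) * (c:R), ?_⟩
    rw [hc]
    push_cast
    rw [← mul_assoc, ← (Nat.cast_commute p (x ^ (i+1) * (-1:R) ^ (m - i))).eq, mul_assoc]
  · rw [← hm, hx]
    simp only [pow_zero, one_mul, mul_one, Nat.choose_self, Nat.choose_zero_right, Nat.cast_one,
      Nat.sub_zero, Nat.sub_self]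
    rcases hp.eq_two_or_odd' with h2 | hodd
    · subst h2
      rcases Nat.eq_zero_or_pos a with ha | ha
      · subst ha; simp
      · have he : Even (2 ^ a) := (Nat.even_pow' (by omega)).mpr even_two
        rw [he.neg_one_pow]
        norm_num
    · have ho : Odd (p ^ a) := hodd.pow
      rw [ho.neg_one_pow]
      simp

lemma aux_chunk {R : Type*} [Ring R] {p : ℕ} {S : Set R} {m : ℕ}
    (hm : ∀ l : List R, m ≤ l.length → (∀ x ∈ l, x ∈ S) → ∃ w, l.prod = (p:R) * w) :
    ∀ (j : ℕ) (l : List R), j * m ≤ l.length → (∀ x ∈ l, x ∈ S) →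
      ∃ w, l.prod = (p:R)^j * w := by
  intro j
  induction j with
  | zero => exact fun l _ _ => ⟨l.prod, by simp⟩
  | succ j IH =>
    intro l hlen hmem
    have hsm : (j + 1) * m = j * m + m := by ring
    obtain ⟨w₁, hw₁⟩ := hm (l.take m) (by simp [List.length_take]; omega)
      (fun x hx => hmem x (List.take_subset _ _ hx))
    obtain ⟨w₂, hw₂⟩ := IH (l.drop m) (by simp [List.length_drop]; omega)
      (fun x hx => hmem x (List.drop_subset _ _ hx))
    refine ⟨w₁ * w₂, ?_⟩
    rw [← List.prod_take_mul_prod_drop l m, hw₁, hw₂]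
    calc (p:R) * w₁ * ((p:R)^j * w₂)
        = (p:R) * (w₁ * (p:R)^j) * w₂ := by rw [mul_assoc, mul_assoc, mul_assoc]
      _ = (p:R) * ((p:R)^j * w₁) * w₂ := by rw [((Nat.cast_commute p w₁).pow_left j).eq]
      _ = ((p:R) * (p:R)^j) * (w₁ * w₂) := by rw [← mul_assoc, mul_assoc ((p:R) * (p:R)^j)]
      _ = (p:R)^(j+1) * (w₁ * w₂) := by rw [← pow_succ']

section AugAux

variable {p : ℕ} [Fact p.Prime]

/-- The augmentation of a group ring over `ℤ_p`. -/
noncomputable def augF (P : Type*) [Group P] : MonoidAlgebra ℤ_[p] P →+* ℤ_[p] :=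
  ((MonoidAlgebra.lift ℤ_[p] ℤ_[p] P) 1).toRingHom

lemma augF_single {P : Type*} [Group P] (g : P) (c : ℤ_[p]) :
    augF P (MonoidAlgebra.single g c) = c := by
  show ((MonoidAlgebra.lift ℤ_[p] ℤ_[p] P) 1) (MonoidAlgebra.single g c) = c
  rw [MonoidAlgebra.lift_single]
  simp

lemma augF_comp {P P' : Type*} [Group P] [Group P'] (f : P →* P') :
    (augF (p := p) P').comp (MonoidAlgebra.mapDomainRingHom ℤ_[p] f) = augF P := by
  refine MonoidAlgebra.ringHom_ext (fun c => ?_) (fun g => ?_) <;>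
    simp [MonoidAlgebra.mapDomainRingHom_apply, Finsupp.mapDomain_single, augF_single]

lemma natCast_monoidAlgebra {P : Type*} [Group P] (n : ℕ) :
    (n : MonoidAlgebra ℤ_[p] P) = MonoidAlgebra.single 1 (n : ℤ_[p]) := by
  rw [show (MonoidAlgebra.single (1:P) (n : ℤ_[p])) = MonoidAlgebra.singleOneRingHom (n : ℤ_[p]) from rfl,
    map_natCast]

lemma pPow_coeff {P : Type*} [Group P] {j : ℕ} {y : MonoidAlgebra ℤ_[p] P}
    (hy : ∃ w, y = (p : MonoidAlgebra ℤ_[p] P) ^ j * w) (g : P) : (p : ℤ_[p]) ^ j ∣ y.coeff g := by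
  obtain ⟨w, rfl⟩ := hy
  rw [natCast_monoidAlgebra, MonoidAlgebra.single_pow, one_pow, MonoidAlgebra.coeff_single_one_mul]
  exact Dvd.intro _ rfl

end AugAux

lemma central_single {p : ℕ} [Fact p.Prime] {P : Type*} [Group P] {z : P}
    (hz : z ∈ Subgroup.center P) (f : MonoidAlgebra ℤ_[p] P) :
    MonoidAlgebra.single z (1:ℤ_[p]) * f = f * MonoidAlgebra.single z 1 := by
  refine MonoidAlgebra.ext (Finsupp.ext fun y => ?_)
  rw [MonoidAlgebra.coeff_single_mul_apply, MonoidAlgebra.coeff_mul_single_apply, one_mul, mul_one]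
  have hc : Commute y z := Subgroup.mem_center_iff.1 hz y
  rw [hc.inv_right.eq]

noncomputable def secOut {p : ℕ} [Fact p.Prime] {P : Type*} [Group P] (z : P) :
    MonoidAlgebra ℤ_[p] (P ⧸ Subgroup.zpowers z) →+ MonoidAlgebra ℤ_[p] P :=
  { toFun := MonoidAlgebra.mapDomain Quotient.out, map_zero' := MonoidAlgebra.mapDomain_zero _,
    map_add' := MonoidAlgebra.mapDomain_add _ }

noncomputable def quotMap {p : ℕ} [Fact p.Prime] {P : Type*} [Group P] (z : P) :
    MonoidAlgebra ℤ_[p] P →+ MonoidAlgebra ℤ_[p] (P ⧸ Subgroup.zpowers z) :=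
  { toFun := MonoidAlgebra.mapDomain QuotientGroup.mk, map_zero' := MonoidAlgebra.mapDomain_zero _,
    map_add' := MonoidAlgebra.mapDomain_add _ }

lemma sub_section_mul {p : ℕ} [Fact p.Prime] {P : Type*} [Group P] [Finite P] {z : P}
    (f : MonoidAlgebra ℤ_[p] P) :
    ∃ r : MonoidAlgebra ℤ_[p] P,
      f - secOut z (quotMap z f) = r * (MonoidAlgebra.single z 1 - 1) := by
  induction f using MonoidAlgebra.induction_linear with
  | zero => exact ⟨0, by simp⟩
  | add f g hf hg =>
    obtain ⟨rf, hrf⟩ := hf; obtain ⟨rg, hrg⟩ := hg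
    refine ⟨rf + rg, ?_⟩
    rw [map_add, map_add, add_mul, ← hrf, ← hrg]
    exact (sub_add_sub_comm _ _ _ _).symm
  | single g c =>
    have h1 : quotMap (p := p) z (MonoidAlgebra.single g c)
        = MonoidAlgebra.single (QuotientGroup.mk g) c := MonoidAlgebra.mapDomain_single
    have h2 : secOut (p := p) z (MonoidAlgebra.single (QuotientGroup.mk g) c)
        = MonoidAlgebra.single ((QuotientGroup.mk g : P ⧸ Subgroup.zpowers z)).out c :=
      MonoidAlgebra.mapDomain_single
    rw [h1, h2]
    have hmem : ((QuotientGroup.mk (s := Subgroup.zpowers z) g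
        : P ⧸ Subgroup.zpowers z).out)⁻¹ * g ∈ Subgroup.zpowers z :=
      (QuotientGroup.eq).1 (Quotient.out_eq _)
    obtain ⟨k, hk⟩ := Submonoid.mem_powers_iff _ _ |>.1 (mem_powers_iff_mem_zpowers.2 hmem)
    generalize hgen : (QuotientGroup.mk (s := Subgroup.zpowers z) g
        : P ⧸ Subgroup.zpowers z).out = w at hk ⊢
    have hgw : g = w * z ^ k := by rw [hk]; group
    refine ⟨MonoidAlgebra.single w c *
      ∑ i ∈ Finset.range k, MonoidAlgebra.single z (1:ℤ_[p]) ^ i, ?_⟩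
    rw [mul_assoc, geom_sum_mul, hgw]
    simp [mul_sub, MonoidAlgebra.single_pow, MonoidAlgebra.single_mul_single]

lemma block_mul {R : Type*} [Ring R] {π D : R} (hπ : ∀ x : R, π * x = x * π)
    (hD : ∀ x : R, D * x = x * D) (w₁ r₁ w₂ r₂ : R) (t : ℕ) :
    ∃ w, (π * w₁ + r₁ * D) * (π * w₂ + r₂ * D ^ t)
      = π * w + r₁ * r₂ * D ^ (t + 1) := by
  refine ⟨w₁ * (π * w₂ + r₂ * D ^ t) + r₁ * (w₂ * D), ?_⟩
  have h3 : r₁ * D * (π * w₂) = π * (r₁ * (w₂ * D)) := by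
    rw [mul_assoc r₁, hD, mul_assoc π, ← mul_assoc r₁, ← hπ, mul_assoc]
  have h4 : r₁ * D * (r₂ * D ^ t) = r₁ * r₂ * D ^ (t + 1) := by
    rw [mul_assoc r₁, hD, mul_assoc r₂, ← pow_succ, ← mul_assoc]
  rw [add_mul, mul_add (r₁ * D), h3, h4, mul_assoc π w₁, mul_add π]
  abel

lemma key_finite (p : ℕ) [Fact p.Prime] :
    ∀ (n : ℕ) (P : Type) [Group P] [Finite P], Nat.card P ≤ n → IsPGroup p P →
      ∃ m : ℕ, ∀ l : List (MonoidAlgebra ℤ_[p] P), m ≤ l.length →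
        (∀ x ∈ l, (p:ℤ_[p]) ∣ augF P x) →
        ∃ w, l.prod = (p : MonoidAlgebra ℤ_[p] P) * w := by
  intro n
  induction n using Nat.strong_induction_on with
  | _ n IH =>
    intro P _ _ hcard hP
    have hπ : ∀ x : MonoidAlgebra ℤ_[p] P, (p : MonoidAlgebra ℤ_[p] P) * x = x * p :=
      fun x => (Nat.cast_commute p x).eq
    rcases subsingleton_or_nontrivial P with hsub | hnt
    · refine ⟨1, fun l hl hmem => ?_⟩
      obtain ⟨a, t, rfl⟩ : ∃ a t, l = a :: t := by
        cases l with
        | nil => simp at hl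
        | cons a t => exact ⟨a, t, rfl⟩
      have ha : a = MonoidAlgebra.single (1:P) (a.coeff 1) := MonoidAlgebra.ext (Finsupp.ext fun g => by
        rw [Subsingleton.elim g (1:P)]; simp)
      have haug : augF P a = a.coeff 1 := by conv_lhs => rw [ha, augF_single]
      obtain ⟨c, hc⟩ : (p:ℤ_[p]) ∣ a.coeff 1 := haug ▸ hmem a (by simp)
      refine ⟨MonoidAlgebra.single 1 c * t.prod, ?_⟩
      rw [List.prod_cons, ha, hc, natCast_monoidAlgebra, ← mul_assoc,
        MonoidAlgebra.single_mul_single, mul_one]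
    · haveI := hP.center_nontrivial
      obtain ⟨z', hz'⟩ := exists_ne (1 : Subgroup.center P)
      have hzc : (z' : P) ∈ Subgroup.center P := z'.2
      set z : P := (z' : P) with hzdef
      have hz1 : z ≠ 1 := fun h => hz' (Subtype.ext h)
      obtain ⟨k0, hk0⟩ := hP z
      obtain ⟨a, _, hq⟩ := (Nat.dvd_prime_pow Fact.out).1 (orderOf_dvd_of_pow_eq_one hk0)
      set q := orderOf z with hqdef
      have hq0 : 0 < q := orderOf_pos z
      have hq1 : 1 < q := by
        rcases Nat.lt_or_ge 1 q with h | h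
        · exact h
        · exfalso; exact hz1 (orderOf_eq_one_iff.1 (by omega))
      haveI hHn : (Subgroup.zpowers z).Normal := by
        refine ⟨fun h hh g => ?_⟩
        have hcomm : g * h = h * g :=
          Subgroup.mem_center_iff.1 (Subgroup.zpowers_le.2 hzc hh) g
        simpa [hcomm, mul_assoc] using hh
      haveI : Finite (P ⧸ Subgroup.zpowers z) := Quotient.finite _
      have hcard' : Nat.card (P ⧸ Subgroup.zpowers z) < Nat.card P := by
        have h1 := Subgroup.card_eq_card_quotient_mul_card_subgroup (Subgroup.zpowers z)
        have h2 : Nat.card (Subgroup.zpowers z) = q := Nat.card_zpowers z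
        have h3 : 0 < Nat.card (P ⧸ Subgroup.zpowers z) := Nat.card_pos
        nlinarith
      obtain ⟨m', hm'⟩ := IH (Nat.card (P ⧸ Subgroup.zpowers z))
        (lt_of_lt_of_le hcard' hcard) (P ⧸ Subgroup.zpowers z) le_rfl
        (hP.to_quotient (Subgroup.zpowers z))
      set φ := MonoidAlgebra.mapDomainRingHom ℤ_[p] (QuotientGroup.mk' (Subgroup.zpowers z))
        with hφdef
      set ζ := MonoidAlgebra.single z (1:ℤ_[p]) with hζdef
      have hD : ∀ x : MonoidAlgebra ℤ_[p] P, (ζ - 1) * x = x * (ζ - 1) := fun x => by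
        rw [sub_mul, mul_sub, central_single hzc, one_mul, mul_one]
      have stepA : ∀ l : List (MonoidAlgebra ℤ_[p] P), m' ≤ l.length →
          (∀ x ∈ l, (p:ℤ_[p]) ∣ augF P x) →
          ∃ w r, l.prod = (p : MonoidAlgebra ℤ_[p] P) * w + r * (ζ - 1) := by
        intro l hl hmem
        obtain ⟨w', hw'⟩ := hm' (l.map φ) (by simpa using hl) (by
          intro x hx
          simp only [List.mem_map] at hx
          obtain ⟨y, hy, rfl⟩ := hx
          have hcomp : augF (P ⧸ Subgroup.zpowers z) (φ y) = augF P y := by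
            rw [← augF_comp (QuotientGroup.mk' (Subgroup.zpowers z))]; rfl
          rw [hcomp]; exact hmem y hy)
        have hprod : φ l.prod = (l.map φ).prod := map_list_prod φ l
        obtain ⟨r, hr⟩ := sub_section_mul (z := z) l.prod
        have hquot : quotMap (p := p) z l.prod = φ l.prod := rfl
        have hout : secOut (p := p) z (φ l.prod)
            = (p : MonoidAlgebra ℤ_[p] P) * secOut z w' := by
          rw [hprod, hw', ← nsmul_eq_mul, ← nsmul_eq_mul, map_nsmul]
        refine ⟨secOut z w', r, ?_⟩
        rw [← hout, add_comm, ← hr, hquot]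
        abel
      have stepB : ∀ (t : ℕ) (l : List (MonoidAlgebra ℤ_[p] P)), t * m' ≤ l.length →
          (∀ x ∈ l, (p:ℤ_[p]) ∣ augF P x) →
          ∃ w r, l.prod = (p : MonoidAlgebra ℤ_[p] P) * w + r * (ζ - 1) ^ t := by
        intro t
        induction t with
        | zero => exact fun l _ _ => ⟨0, l.prod, by simp⟩
        | succ t IHt =>
          intro l hl hmem
          have hsm : (t + 1) * m' = t * m' + m' := by ring
          obtain ⟨w₁, r₁, h₁⟩ := stepA (l.take m') (by simp [List.length_take]; omega)
            (fun x hx => hmem x (List.take_subset _ _ hx))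
          obtain ⟨w₂, r₂, h₂⟩ := IHt (l.drop m') (by simp [List.length_drop]; omega)
            (fun x hx => hmem x (List.drop_subset _ _ hx))
          obtain ⟨w, hw⟩ := block_mul hπ hD w₁ r₁ w₂ r₂ t
          exact ⟨w, r₁ * r₂, by
            rw [← List.prod_take_mul_prod_drop l m', h₁, h₂, hw]⟩
      refine ⟨q * m', fun l hl hmem => ?_⟩
      obtain ⟨w, r, hwr⟩ := stepB q l hl hmem
      have hζq : ζ ^ (p ^ a) = 1 := by
        rw [hζdef, MonoidAlgebra.single_pow, one_pow, ← hq, pow_orderOf_eq_one,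
          MonoidAlgebra.one_def]
      obtain ⟨v, hv⟩ := aux_sub_one_pow (R := MonoidAlgebra ℤ_[p] P) Fact.out a ζ hζq
      refine ⟨w + r * v, ?_⟩
      rw [hwr, hq, hv, mul_add, ← mul_assoc, ← mul_assoc, ← hπ r, mul_assoc]

section GlobalAux

open scoped Pointwise

variable (p : ℕ) [Fact p.Prime] (G : Type) [Group G] [TopologicalSpace G] [IsTopologicalGroup G]

/-- Projection of the completed group ring onto one finite level. -/
noncomputable def cgrProj (N : OpenNormalSubgroup G) :
    CompletedGroupRing p G →+* MonoidAlgebra ℤ_[p] (G ⧸ N.toSubgroup) :=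
  (Pi.evalRingHom _ N).comp (CompletedGroupRing p G).subtype

lemma cgrProj_continuous (N : OpenNormalSubgroup G) : Continuous (cgrProj p G N) :=
  (continuous_apply N).comp continuous_subtype_val

lemma augF_cgrProj (N : OpenNormalSubgroup G) (x : CompletedGroupRing p G) :
    augF (G ⧸ N.toSubgroup) (cgrProj p G N x) = cgrAug p G x := by
  have hle : N.toSubgroup ≤ (cgrTop G).toSubgroup := le_top
  have hx := x.2 N (cgrTop G) hle
  have h2 := DFunLike.congr_fun (augF_comp (p := p)
    (QuotientGroup.map N.toSubgroup (cgrTop G).toSubgroup (MonoidHom.id G)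
      (by simpa using hle))) (x.1 N)
  rw [RingHom.comp_apply] at h2
  show augF (G ⧸ N.toSubgroup) (x.1 N) = cgrAug p G x
  rw [← h2]
  show augF _ (cgrTrans p G N (cgrTop G) hle (x.1 N)) = _
  rw [hx]
  rfl

lemma mem_radical_iff (x : CompletedGroupRing p G) :
    x ∈ cgrRadical p G ↔ (p:ℤ_[p]) ∣ cgrAug p G x := by
  rw [cgrRadical, RingHom.mem_ker, RingHom.comp_apply, ← RingHom.mem_ker, PadicInt.ker_toZMod,
    PadicInt.maximalIdeal_eq_span_p, Ideal.mem_span_singleton]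

lemma mem_set_pow {R : Type*} [Monoid R] {S : Set R} :
    ∀ {n : ℕ} {y : R}, y ∈ S ^ n → ∃ l : List R, l.length = n ∧ (∀ x ∈ l, x ∈ S) ∧ l.prod = y := by
  intro n
  induction n with
  | zero =>
    intro y hy
    rw [pow_zero, Set.mem_one] at hy
    exact ⟨[], rfl, by simp, by simp [hy]⟩
  | succ n IHn =>
    intro y hy
    rw [pow_succ] at hy
    obtain ⟨a, ha, b, hb, rfl⟩ := Set.mem_mul.1 hy
    obtain ⟨l, hlen, hmem, hprod⟩ := IHn ha
    refine ⟨l ++ [b], by simp [hlen], ?_, by simp [hprod]⟩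
    intro x hx
    rcases List.mem_append.1 hx with h | h
    · exact hmem x h
    · simp only [List.mem_singleton] at h
      exact h ▸ hb

lemma quotient_isPGroup (hG : IsProPGroup p G) (N : OpenNormalSubgroup G) :
    IsPGroup p (G ⧸ N.toSubgroup) := by
  haveI := hG.compact
  haveI : Finite (G ⧸ N.toSubgroup) :=
    Subgroup.quotient_finite_of_isOpen N.toSubgroup N.isOpen
  refine hG.proP (G ⧸ N.toSubgroup) (QuotientGroup.mk' N.toSubgroup) ?_
    (QuotientGroup.mk'_surjective _)
  intro s
  rw [isOpen_iff_mem_nhds]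
  intro a ha
  have hsub : a • (N.toSubgroup : Set G) ⊆ (QuotientGroup.mk' N.toSubgroup) ⁻¹' s := by
    rintro x ⟨u, hu, rfl⟩
    show QuotientGroup.mk (a * u) ∈ s
    have heq : (QuotientGroup.mk (a * u) : G ⧸ N.toSubgroup) = QuotientGroup.mk a := by
      rw [QuotientGroup.eq]
      simpa using N.toSubgroup.inv_mem hu
    rw [heq]
    exact ha
  exact Filter.mem_of_superset
    ((N.isOpen.leftCoset a).mem_nhds ⟨1, N.toSubgroup.one_mem, mul_one a⟩) hsub

lemma padic_zero {a : ℤ_[p]} (h : ∀ j : ℕ, (p:ℤ_[p])^j ∣ a) : a = 0 := by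
  by_contra h0
  have hpos : 0 < ‖a‖ := norm_pos_iff.2 h0
  have hlt : (p:ℝ)⁻¹ < 1 := by
    rw [inv_lt_one_iff₀]
    right
    exact_mod_cast (Fact.out : p.Prime).one_lt
  obtain ⟨j, hj⟩ := exists_pow_lt_of_lt_one hpos hlt
  have hb : ‖a‖ ≤ (p:ℝ) ^ (-(j:ℤ)) :=
    (PadicInt.norm_le_pow_iff_mem_span_pow a j).2 (Ideal.mem_span_singleton.2 (h j))
  rw [zpow_neg, zpow_natCast, ← inv_pow] at hb
  linarith

lemma main_engine {S : Set (CompletedGroupRing p G)}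
    (hS : ∀ y ∈ S, (p:ℤ_[p]) ∣ cgrAug p G y)
    (N : OpenNormalSubgroup G) {m : ℕ}
    (hm : ∀ l : List (MonoidAlgebra ℤ_[p] (G ⧸ N.toSubgroup)), m ≤ l.length →
      (∀ y ∈ l, (p:ℤ_[p]) ∣ augF (G ⧸ N.toSubgroup) y) →
      ∃ w, l.prod = (p : MonoidAlgebra ℤ_[p] (G ⧸ N.toSubgroup)) * w)
    (j k : ℕ) (hjk : j * m ≤ k + 1) :
    ∀ x ∈ AddSubgroup.closure (S ^ (k+1)),
      ∃ w, cgrProj p G N x = (p : MonoidAlgebra ℤ_[p] (G ⧸ N.toSubgroup))^j * w := by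
  intro x hx
  refine AddSubgroup.closure_induction ?_ ⟨0, by simp⟩ ?_ ?_ hx
  · intro y hy
    obtain ⟨l, hlen, hmem, hprod⟩ := mem_set_pow hy
    have hproj : (l.map (cgrProj p G N)).prod = cgrProj p G N y := by
      rw [← hprod]
      clear hprod hlen hmem
      induction l with
      | nil => exact ((cgrProj p G N).map_one).symm
      | cons a t ih =>
        simp only [List.map_cons, List.prod_cons, (cgrProj p G N).map_mul, ih]
    have hentries : ∀ y' ∈ l.map (cgrProj p G N),
        y' ∈ {y' | (p:ℤ_[p]) ∣ augF (G ⧸ N.toSubgroup) y'} := by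
      intro y' hy'
      simp only [List.mem_map] at hy'
      obtain ⟨u, hu, rfl⟩ := hy'
      show (p:ℤ_[p]) ∣ augF (G ⧸ N.toSubgroup) (cgrProj p G N u)
      rw [augF_cgrProj]
      exact hS u (hmem u hu)
    obtain ⟨w, hw⟩ := aux_chunk (S := {y' | (p:ℤ_[p]) ∣ augF (G ⧸ N.toSubgroup) y'}) hm j
      (l.map (cgrProj p G N)) (by simpa [hlen] using hjk) hentries
    exact ⟨w, by rw [← hproj, hw]⟩
  · rintro a b _ _ ⟨wa, hwa⟩ ⟨wb, hwb⟩
    exact ⟨wa + wb, by rw [(cgrProj p G N).map_add, hwa, hwb, mul_add]⟩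
  · rintro a _ ⟨wa, hwa⟩
    exact ⟨-wa, by rw [(cgrProj p G N).map_neg, hwa, mul_neg]⟩

lemma norm_set_closed (N : OpenNormalSubgroup G) (j : ℕ) :
    IsClosed {x : CompletedGroupRing p G | ∀ g : G ⧸ N.toSubgroup,
      ‖(cgrProj p G N x).coeff g‖ ≤ (p:ℝ) ^ (-(j:ℤ))} := by
  have hcoeff : ∀ g : G ⧸ N.toSubgroup,
      Continuous (fun y : MonoidAlgebra ℤ_[p] (G ⧸ N.toSubgroup) => y.coeff g) :=
    fun g => (continuous_apply g).comp continuous_induced_dom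
  have : {x : CompletedGroupRing p G | ∀ g : G ⧸ N.toSubgroup,
      ‖(cgrProj p G N x).coeff g‖ ≤ (p:ℝ) ^ (-(j:ℤ))}
      = ⋂ g : G ⧸ N.toSubgroup,
        (fun x : CompletedGroupRing p G => ‖(cgrProj p G N x).coeff g‖) ⁻¹'
          Set.Iic ((p:ℝ) ^ (-(j:ℤ))) := by
    ext x
    simp [Set.mem_iInter]
  rw [this]
  exact isClosed_iInter fun g => IsClosed.preimage
    (continuous_norm.comp ((hcoeff g).comp (cgrProj_continuous p G N))) isClosed_Iic

end GlobalAux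

open scoped Pointwise in
/-- Let `G` be a finitely generated pro-`p` group and `J` the kernel of the
ring homomorphism `ℤ_p[[G]] → ℤ/p` (augmentation followed by reduction mod `p`). Then
`⋂_{k ≥ 1} J^k = 0`, and hence the intersection of the closures of the powers of the
augmentation ideal `I` of `ℤ_p[[G]]` is trivial.  (Since `ℤ_p[[G]]` need not be commutative,
the `k`-th power of an ideal is rendered as the additive subgroup generated by `k`-fold
products of its elements.) -/
theorem statement7 (p : ℕ) [Fact p.Prime]
    (G : Type) [Group G] [TopologicalSpace G] [IsTopologicalGroup G]
    (hG : IsProPGroup p G)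
    (hfg : ∃ S : Finset G, Subgroup.topologicalClosure (Subgroup.closure (S : Set G)) = ⊤) :
    (∀ x : CompletedGroupRing p G,
        (∀ k : ℕ, x ∈ AddSubgroup.closure (((cgrRadical p G : Set _)) ^ (k + 1))) → x = 0) ∧
      (⋂ k : ℕ,
          closure (SetLike.coe (AddSubgroup.closure
            ((cgrAugIdeal p G : Set (CompletedGroupRing p G)) ^ (k + 1)))))
        = {0} := by
  classical
  clear hfg
  haveI := hG.compact
  have hfin : ∀ N : OpenNormalSubgroup G, Finite (G ⧸ N.toSubgroup) :=
    fun N => Subgroup.quotient_finite_of_isOpen N.toSubgroup N.isOpen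
  have hkey : ∀ N : OpenNormalSubgroup G, ∃ m : ℕ,
      ∀ l : List (MonoidAlgebra ℤ_[p] (G ⧸ N.toSubgroup)), m ≤ l.length →
      (∀ y ∈ l, (p:ℤ_[p]) ∣ augF (G ⧸ N.toSubgroup) y) →
      ∃ w, l.prod = (p : MonoidAlgebra ℤ_[p] (G ⧸ N.toSubgroup)) * w := by
    intro N
    haveI := hfin N
    exact key_finite p (Nat.card (G ⧸ N.toSubgroup)) (G ⧸ N.toSubgroup) le_rfl
      (quotient_isPGroup p G hG N)
  have hSrad : ∀ y ∈ (cgrRadical p G : Set (CompletedGroupRing p G)),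
      (p:ℤ_[p]) ∣ cgrAug p G y := fun y hy => (mem_radical_iff p G y).1 hy
  have hSaug : ∀ y ∈ (cgrAugIdeal p G : Set (CompletedGroupRing p G)),
      (p:ℤ_[p]) ∣ cgrAug p G y := by
    intro y hy
    have hy0 : cgrAug p G y = 0 := by
      have := hy
      rw [cgrAugIdeal, SetLike.mem_coe, RingHom.mem_ker] at this
      exact this
    rw [hy0]
    exact dvd_zero _
  constructor
  · intro x hx
    apply Subtype.ext
    funext N
    show cgrProj p G N x = 0
    refine MonoidAlgebra.ext (Finsupp.ext fun g => padic_zero p (fun j => ?_))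
    obtain ⟨m, hm⟩ := hkey N
    obtain ⟨w, hw⟩ := main_engine p G hSrad N hm j (j*m) (by omega) x (hx (j*m))
    rw [hw]
    exact pPow_coeff ⟨w, rfl⟩ g
  · ext x
    simp only [Set.mem_iInter, Set.mem_singleton_iff]
    constructor
    · intro hx
      apply Subtype.ext
      funext N
      show cgrProj p G N x = 0
      refine MonoidAlgebra.ext (Finsupp.ext fun g => padic_zero p (fun j => ?_))
      obtain ⟨m, hm⟩ := hkey N
      have hsub : (AddSubgroup.closure
          ((cgrAugIdeal p G : Set (CompletedGroupRing p G)) ^ (j*m+1)) : Set _)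
          ⊆ {x' : CompletedGroupRing p G | ∀ g' : G ⧸ N.toSubgroup,
              ‖(cgrProj p G N x').coeff g'‖ ≤ (p:ℝ) ^ (-(j:ℤ))} := by
        intro y hy
        obtain ⟨w, hw⟩ := main_engine p G hSaug N hm j (j*m) (by omega) y hy
        intro g'
        refine (PadicInt.norm_le_pow_iff_mem_span_pow _ j).2 (Ideal.mem_span_singleton.2 ?_)
        rw [hw]
        exact pPow_coeff ⟨w, rfl⟩ g'
      have hcl := closure_minimal hsub (norm_set_closed p G N j)
      have hxg := hcl (hx (j*m)) g
      exact Ideal.mem_span_singleton.1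
        ((PadicInt.norm_le_pow_iff_mem_span_pow _ j).1 hxg)
    · intro hx
      subst hx
      intro k
      exact subset_closure (SetLike.mem_coe.2 (AddSubgroup.zero_mem _))
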